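/- arXiv:2207.01086 — 3 statements merged into one kernel-verified Lean document; each statement's English description precedes it below -/
import Mathlib

section
/- Let ω be a nonnegative integrable function on [0,1) with moments ω_x = ∫_0^1 r^x ω(r) dr. If there exist constants C > 0 and η > 0 such that ω_x ≤ C (y/x)^η ω_y for all 0 < x ≤ y < ∞, then ω belongs to the class D̂, i.e. there is C' > 1 with ω̂(r) ≤ C' ω̂((1+r)/2) for all r ∈ [0,1). -/
open MeasureTheory

/-- The tail integral of a radial weight. -/
noncomputable def hat (ω : ℝ → ℝ) (r : ℝ) : ℝ := ∫ s in r..1, ω s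

/-- The x-th moment of a radial weight. -/
noncomputable def moment (ω : ℝ → ℝ) (x : ℝ) : ℝ := ∫ r in (0:ℝ)..1, r ^ x * ω r

open Real Filter

section Aux

lemma aux_cont {x : ℝ} (hx : 0 < x) : Continuous fun s : ℝ => s ^ x := by
  rw [continuous_iff_continuousAt]
  intro s
  exact Real.continuousAt_rpow_const s x (Or.inr hx.le)

variable {ω : ℝ → ℝ}

lemma hat_nonneg (h0 : ∀ s, 0 ≤ ω s) {r : ℝ} (hr : r ≤ 1) : 0 ≤ hat ω r :=
  intervalIntegral.integral_nonneg hr fun u _ => h0 u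

lemma mom_nonneg (h0 : ∀ s, 0 ≤ ω s) (x : ℝ) : 0 ≤ moment ω x :=
  intervalIntegral.integral_nonneg zero_le_one fun u hu =>
    mul_nonneg (Real.rpow_nonneg hu.1 x) (h0 u)

lemma hint_sub (hint : IntervalIntegrable ω volume 0 1) {a b : ℝ}
    (ha : 0 ≤ a) (ha1 : a ≤ 1) (hb0 : 0 ≤ b) (hb : b ≤ 1) :
    IntervalIntegrable ω volume a b :=
  hint.mono_set (Set.uIcc_subset_uIcc
    (by rw [Set.uIcc_of_le zero_le_one]; exact ⟨ha, ha1⟩)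
    (by rw [Set.uIcc_of_le zero_le_one]; exact ⟨hb0, hb⟩))

lemma momint_sub (hint : IntervalIntegrable ω volume 0 1) {x a b : ℝ} (hx : 0 < x)
    (ha : 0 ≤ a) (ha1 : a ≤ 1) (hb0 : 0 ≤ b) (hb : b ≤ 1) :
    IntervalIntegrable (fun s => s ^ x * ω s) volume a b :=
  (hint.continuousOn_mul ((aux_cont hx).continuousOn)).mono_set
    (Set.uIcc_subset_uIcc
      (by rw [Set.uIcc_of_le zero_le_one]; exact ⟨ha, ha1⟩)
      (by rw [Set.uIcc_of_le zero_le_one]; exact ⟨hb0, hb⟩))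

lemma hat_mono (h0 : ∀ s, 0 ≤ ω s) (hint : IntervalIntegrable ω volume 0 1)
    {a b : ℝ} (ha : 0 ≤ a) (hab : a ≤ b) (hb : b ≤ 1) : hat ω b ≤ hat ω a := by
  have h1 : IntervalIntegrable ω volume a b :=
    hint_sub hint ha (le_trans hab hb) (le_trans ha hab) hb
  have h2 : IntervalIntegrable ω volume b 1 :=
    hint_sub hint (le_trans ha hab) hb zero_le_one le_rfl
  have h3 : (∫ s in a..b, ω s) + (∫ s in b..1, ω s) = ∫ s in a..1, ω s :=
    intervalIntegral.integral_add_adjacent_intervals h1 h2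
  have h4 : 0 ≤ ∫ s in a..b, ω s := intervalIntegral.integral_nonneg hab fun u _ => h0 u
  simp only [hat]
  linarith

lemma lemA (h0 : ∀ s, 0 ≤ ω s) (hint : IntervalIntegrable ω volume 0 1)
    {r x : ℝ} (hr0 : 0 ≤ r) (hr1 : r ≤ 1) (hx : 0 < x) :
    r ^ x * hat ω r ≤ moment ω x := by
  have I1 : IntervalIntegrable (fun s => s ^ x * ω s) volume 0 r :=
    momint_sub hint hx le_rfl zero_le_one hr0 hr1
  have I2 : IntervalIntegrable (fun s => s ^ x * ω s) volume r 1 :=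
    momint_sub hint hx hr0 hr1 zero_le_one le_rfl
  have hsplit : (∫ s in (0:ℝ)..r, s ^ x * ω s) + (∫ s in r..1, s ^ x * ω s)
      = moment ω x := intervalIntegral.integral_add_adjacent_intervals I1 I2
  have e1 : 0 ≤ ∫ s in (0:ℝ)..r, s ^ x * ω s :=
    intervalIntegral.integral_nonneg hr0 fun u hu =>
      mul_nonneg (Real.rpow_nonneg hu.1 x) (h0 u)
  have e2 : ∫ s in r..1, r ^ x * ω s ≤ ∫ s in r..1, s ^ x * ω s := by
    refine intervalIntegral.integral_mono_on hr1
      ((hint_sub hint hr0 hr1 zero_le_one le_rfl).const_mul (r ^ x)) I2 fun s hs => ?_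
    exact mul_le_mul_of_nonneg_right (Real.rpow_le_rpow hr0 hs.1 hx.le) (h0 s)
  have e3 : ∫ s in r..1, r ^ x * ω s = r ^ x * hat ω r := by
    rw [hat, intervalIntegral.integral_const_mul]
  linarith

lemma lemC (h0 : ∀ s, 0 ≤ ω s) (hint : IntervalIntegrable ω volume 0 1)
    {x l t : ℝ} (hx : 0 < x) (hl : 1 ≤ l) (ht0 : 0 ≤ t) (ht1 : t ≤ 1) :
    moment ω (l * x) ≤ t ^ ((l - 1) * x) * moment ω x + hat ω t := by
  have hlx : 0 < l * x := mul_pos (lt_of_lt_of_le one_pos hl) hx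
  have Iy1 : IntervalIntegrable (fun s => s ^ (l * x) * ω s) volume 0 t :=
    momint_sub hint hlx le_rfl zero_le_one ht0 ht1
  have Iy2 : IntervalIntegrable (fun s => s ^ (l * x) * ω s) volume t 1 :=
    momint_sub hint hlx ht0 ht1 zero_le_one le_rfl
  have Ix1 : IntervalIntegrable (fun s => s ^ x * ω s) volume 0 t :=
    momint_sub hint hx le_rfl zero_le_one ht0 ht1
  have Ix2 : IntervalIntegrable (fun s => s ^ x * ω s) volume t 1 :=
    momint_sub hint hx ht0 ht1 zero_le_one le_rfl
  have hsplit : (∫ s in (0:ℝ)..t, s ^ (l * x) * ω s) + (∫ s in t..1, s ^ (l * x) * ω s)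
      = moment ω (l * x) := intervalIntegral.integral_add_adjacent_intervals Iy1 Iy2
  have hsplitx : (∫ s in (0:ℝ)..t, s ^ x * ω s) + (∫ s in t..1, s ^ x * ω s)
      = moment ω x := intervalIntegral.integral_add_adjacent_intervals Ix1 Ix2
  have hx2nn : 0 ≤ ∫ s in t..1, s ^ x * ω s :=
    intervalIntegral.integral_nonneg ht1 fun u hu =>
      mul_nonneg (Real.rpow_nonneg (le_trans ht0 hu.1) x) (h0 u)
  have hle : (l - 1) * x + x = l * x := by ring
  have b1 : ∫ s in (0:ℝ)..t, s ^ (l * x) * ω s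
      ≤ ∫ s in (0:ℝ)..t, t ^ ((l - 1) * x) * (s ^ x * ω s) := by
    refine intervalIntegral.integral_mono_on ht0 Iy1 (Ix1.const_mul _) fun s hs => ?_
    have e : s ^ (l * x) = s ^ ((l - 1) * x) * s ^ x := by
      rw [← hle, Real.rpow_add' hs.1 (by rw [hle]; exact hlx.ne')]
    calc s ^ (l * x) * ω s = s ^ ((l - 1) * x) * (s ^ x * ω s) := by rw [e]; ring
      _ ≤ t ^ ((l - 1) * x) * (s ^ x * ω s) := by
          refine mul_le_mul_of_nonneg_right
            (Real.rpow_le_rpow hs.1 hs.2 (mul_nonneg (by linarith) hx.le))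
            (mul_nonneg (Real.rpow_nonneg hs.1 x) (h0 s))
  have b1' : ∫ s in (0:ℝ)..t, t ^ ((l - 1) * x) * (s ^ x * ω s)
      = t ^ ((l - 1) * x) * ∫ s in (0:ℝ)..t, s ^ x * ω s :=
    intervalIntegral.integral_const_mul _ _
  have b1'' : t ^ ((l - 1) * x) * (∫ s in (0:ℝ)..t, s ^ x * ω s)
      ≤ t ^ ((l - 1) * x) * moment ω x := by
    refine mul_le_mul_of_nonneg_left (by linarith) (Real.rpow_nonneg ht0 _)
  have b2 : ∫ s in t..1, s ^ (l * x) * ω s ≤ hat ω t := by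
    have : ∫ s in t..1, s ^ (l * x) * ω s ≤ ∫ s in t..1, ω s := by
      refine intervalIntegral.integral_mono_on ht1 Iy2
        (hint_sub hint ht0 ht1 zero_le_one le_rfl) fun s hs => ?_
      calc s ^ (l * x) * ω s ≤ 1 * ω s :=
            mul_le_mul_of_nonneg_right
              (Real.rpow_le_one (le_trans ht0 hs.1) hs.2 hlx.le) (h0 s)
        _ = ω s := one_mul _
    rw [hat]
    linarith
  linarith

lemma Dhat_of_nonneg (ω : ℝ → ℝ) (h0 : ∀ s, 0 ≤ ω s)
    (hint : IntervalIntegrable ω volume 0 1)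
    (h : ∃ C > 0, ∃ η > 0, ∀ x y : ℝ, 0 < x → x ≤ y →
      moment ω x ≤ C * (y / x) ^ η * moment ω y) :
    ∃ C' > 1, ∀ r ∈ Set.Ico (0:ℝ) 1, hat ω r ≤ C' * hat ω ((1 + r) / 2) := by
  obtain ⟨C, hC, η, hη, hmom⟩ := h
  -- choose Λ with C Λ^η exp(-(Λ-1)/4) ≤ 1/2
  obtain ⟨Λ, hΛ1, hΛ2⟩ : ∃ Λ : ℝ, 1 ≤ Λ ∧ C * Λ ^ η * Real.exp (-((Λ - 1) / 4)) ≤ 1 / 2 := by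
    have T : Tendsto (fun l : ℝ => l ^ (η:ℝ) * Real.exp (-(1/4 : ℝ) * l)) atTop (nhds 0) :=
      tendsto_rpow_mul_exp_neg_mul_atTop_nhds_zero (η:ℝ) (1/4) (by norm_num)
    have T2 : Tendsto (fun l : ℝ => (C * Real.exp (1/4)) * (l ^ (η:ℝ) * Real.exp (-(1/4 : ℝ) * l)))
        atTop (nhds 0) := by
      simpa using T.const_mul (C * Real.exp (1/4))
    have hev := (T2.eventually_lt_const (by norm_num : (0:ℝ) < 1/2)).and
      (eventually_ge_atTop (1:ℝ))
    obtain ⟨Λ, hΛa, hΛb⟩ := hev.exists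
    refine ⟨Λ, hΛb, ?_⟩
    have e : C * Λ ^ η * Real.exp (-((Λ - 1) / 4))
        = C * Real.exp (1/4) * (Λ ^ (η:ℝ) * Real.exp (-(1/4 : ℝ) * Λ)) := by
      rw [show -((Λ - 1) / 4) = 1/4 + -(1/4 : ℝ) * Λ by ring, Real.exp_add,
        Real.rpow_natCast]
      ring
    rw [e]
    exact hΛa.le
  set K := C * Λ ^ η with hKdef
  have hK : 0 < K := mul_pos hC (pow_pos (by linarith : (0:ℝ) < Λ) η)
  -- key step
  have key : ∀ x : ℝ, 0 < x → ∀ t : ℝ, 0 ≤ t → t ≤ 1 →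
      t ^ x ≤ Real.exp (-(1/4 : ℝ)) → moment ω x ≤ 2 * K * hat ω t := by
    intro x hx t ht0 ht1 htx
    have h1 : moment ω x ≤ K * moment ω (Λ * x) := by
      have := hmom x (Λ * x) hx (le_mul_of_one_le_left hx.le hΛ1)
      rwa [mul_div_assoc, div_self hx.ne', mul_one] at this
    have h2 := lemC h0 hint hx hΛ1 ht0 ht1
    have h3 : t ^ ((Λ - 1) * x) ≤ Real.exp (-((Λ - 1) / 4)) := by
      have e : t ^ ((Λ - 1) * x) = (t ^ x) ^ (Λ - 1) := by
        rw [mul_comm, Real.rpow_mul ht0]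
      rw [e]
      calc (t ^ x) ^ (Λ - 1) ≤ (Real.exp (-(1/4 : ℝ))) ^ (Λ - 1) :=
            Real.rpow_le_rpow (Real.rpow_nonneg ht0 x) htx (by linarith)
        _ = Real.exp (-((Λ - 1) / 4)) := by
            rw [← Real.exp_mul, show (-(1/4 : ℝ)) * (Λ - 1) = -((Λ - 1) / 4) by ring]
    have hKt : K * t ^ ((Λ - 1) * x) ≤ 1 / 2 := by
      calc K * t ^ ((Λ - 1) * x) ≤ K * Real.exp (-((Λ - 1) / 4)) :=
            mul_le_mul_of_nonneg_left h3 hK.le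
        _ ≤ 1 / 2 := by rw [hKdef]; exact hΛ2
    have hP := mom_nonneg h0 x
    have hH := hat_nonneg h0 ht1
    nlinarith [mul_le_mul_of_nonneg_left h2 hK.le, mul_le_mul_of_nonneg_right hKt hP]
  -- main case r ∈ [1/2, 1)
  have mainr : ∀ r : ℝ, 1/2 ≤ r → r < 1 →
      hat ω r ≤ 2 * K * Real.exp 2 * hat ω ((1 + r) / 2) := by
    intro r hr hr1
    have hr0 : (0:ℝ) ≤ r := by linarith
    have hrpos : (0:ℝ) < r := by linarith
    have hne : (1:ℝ) - r ≠ 0 := (by linarith : (0:ℝ) < 1 - r).ne'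
    have ht0 : (0:ℝ) ≤ (1 + r) / 2 := by linarith
    have ht1 : (1 + r) / 2 ≤ 1 := by linarith
    have htpos : (0:ℝ) < (1 + r) / 2 := by linarith
    have hx : (0:ℝ) < (1 - r)⁻¹ := inv_pos.mpr (by linarith)
    have hlog : Real.log ((1 + r) / 2) ≤ (r - 1) / 2 := by
      have := Real.log_le_sub_one_of_pos htpos
      linarith
    have htx : ((1 + r) / 2) ^ ((1 - r)⁻¹) ≤ Real.exp (-(1/4 : ℝ)) := by
      rw [Real.rpow_def_of_pos htpos]
      apply Real.exp_le_exp.mpr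
      have h5 : Real.log ((1 + r) / 2) * (1 - r)⁻¹ ≤ ((r - 1) / 2) * (1 - r)⁻¹ :=
        mul_le_mul_of_nonneg_right hlog hx.le
      have h6 : ((r - 1) / 2) * (1 - r)⁻¹ = -(1/2 : ℝ) := by
        field_simp
        ring
      linarith
    have hkey := key _ hx _ ht0 ht1 htx
    have hrx : Real.exp (-2 : ℝ) ≤ r ^ ((1 - r)⁻¹) := by
      rw [Real.rpow_def_of_pos hrpos]
      apply Real.exp_le_exp.mpr
      have h7 := Real.log_le_sub_one_of_pos (inv_pos.mpr hrpos)
      rw [Real.log_inv] at h7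
      have hinv : r * r⁻¹ = 1 := mul_inv_cancel₀ hrpos.ne'
      have hlr : -(2 * (1 - r)) ≤ Real.log r := by
        nlinarith [mul_nonneg (by linarith : (0:ℝ) ≤ 1 - r) (by linarith : (0:ℝ) ≤ 2*r - 1)]
      have h8 := mul_le_mul_of_nonneg_right hlr hx.le
      have h9 : -(2 * (1 - r)) * (1 - r)⁻¹ = -2 := by
        field_simp
      linarith
    have hAr := lemA h0 hint hr0 hr1.le hx
    have hhr := hat_nonneg h0 hr1.le
    have hch : Real.exp (-2 : ℝ) * hat ω r ≤ moment ω ((1 - r)⁻¹) :=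
      le_trans (mul_le_mul_of_nonneg_right hrx hhr) hAr
    have hexp : Real.exp 2 * Real.exp (-2 : ℝ) = 1 := by
      rw [← Real.exp_add]; norm_num
    nlinarith [mul_le_mul_of_nonneg_left hch (Real.exp_pos 2).le,
      mul_le_mul_of_nonneg_left hkey (Real.exp_pos 2).le]
  -- degenerate case
  have hdeg : hat ω (3/4) = 0 → ∀ r ∈ Set.Ico (0:ℝ) 1, hat ω r = 0 := by
    intro h34 r hr
    have h34' : ((3:ℝ)/4) ^ (1:ℝ) ≤ Real.exp (-(1/4 : ℝ)) := by
      rw [Real.rpow_one]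
      have h1 : Real.exp (1/4 : ℝ) ≤ 4/3 := by
        apply le_of_pow_le_pow_left₀ (n := 4) (by norm_num) (by norm_num)
        have h2 : Real.exp (1/4 : ℝ) ^ (4:ℕ) = Real.exp 1 := by
          rw [← Real.exp_nat_mul]; norm_num
        rw [h2]
        calc Real.exp 1 ≤ 2.7182818286 := Real.exp_one_lt_d9.le
          _ ≤ (4/3 : ℝ)^(4:ℕ) := by norm_num
      rw [Real.exp_neg, show (3/4 : ℝ) = (4/3 : ℝ)⁻¹ by norm_num]
      exact inv_anti₀ (Real.exp_pos _) h1
    have hm1 : moment ω 1 = 0 := by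
      have := key 1 one_pos (3/4) (by norm_num) (by norm_num) h34'
      rw [h34] at this
      have := mom_nonneg h0 1
      linarith [key 1 one_pos (3/4) (by norm_num) (by norm_num) h34', mom_nonneg h0 1]
    have hint1 : IntegrableOn (fun s => s ^ (1:ℝ) * ω s) (Set.Ioc (0:ℝ) 1) volume := by
      have := momint_sub hint (x := 1) one_pos le_rfl zero_le_one zero_le_one le_rfl
      exact ((intervalIntegrable_iff_integrableOn_Ioc_of_le zero_le_one).mp this)
    have hnn : 0 ≤ᵐ[volume.restrict (Set.Ioc (0:ℝ) 1)] (fun s => s ^ (1:ℝ) * ω s) :=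
      (ae_restrict_mem measurableSet_Ioc).mono fun s hs =>
        mul_nonneg (Real.rpow_nonneg hs.1.le 1) (h0 s)
    have hzero : (fun s => s ^ (1:ℝ) * ω s) =ᵐ[volume.restrict (Set.Ioc (0:ℝ) 1)] 0 := by
      rw [← MeasureTheory.integral_eq_zero_iff_of_nonneg_ae hnn hint1]
      rw [← intervalIntegral.integral_of_le zero_le_one]
      exact hm1
    have hωzero : ω =ᵐ[volume.restrict (Set.Ioc (0:ℝ) 1)] 0 := by
      filter_upwards [hzero, ae_restrict_mem measurableSet_Ioc] with s hs hmem
      have h' : s ^ (1:ℝ) * ω s = 0 := hs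
      rw [Real.rpow_one] at h'
      have := (mul_eq_zero.mp h').resolve_left (ne_of_gt hmem.1)
      simpa using this
    have hsub : ω =ᵐ[volume.restrict (Set.Ioc r 1)] 0 :=
      ae_restrict_of_ae_restrict_of_subset (Set.Ioc_subset_Ioc_left hr.1) hωzero
    rw [hat, intervalIntegral.integral_of_le hr.2.le]
    exact integral_eq_zero_of_ae hsub
  -- assemble
  rcases eq_or_lt_of_le (hat_nonneg h0 (by norm_num : (3:ℝ)/4 ≤ 1)) with h34 | h34
  · refine ⟨2, one_lt_two, fun r hr => ?_⟩
    rw [hdeg h34.symm r hr, hdeg h34.symm ((1 + r) / 2) ⟨by linarith [hr.1], by linarith [hr.2]⟩]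
    norm_num
  · refine ⟨max (2 * K * Real.exp 2) (hat ω 0 / hat ω (3/4)) + 1, ?_, fun r hr => ?_⟩
    · have h1 : 0 < 2 * K * Real.exp 2 := by positivity
      have h2 := le_max_left (2 * K * Real.exp 2) (hat ω 0 / hat ω (3/4))
      linarith
    · obtain ⟨hr0, hr1⟩ := hr
      have ht0 : (0:ℝ) ≤ (1 + r) / 2 := by linarith
      have ht1 : (1 + r) / 2 ≤ 1 := by linarith
      have hH : 0 ≤ hat ω ((1 + r) / 2) := hat_nonneg h0 ht1
      rcases le_or_gt (1/2 : ℝ) r with hc | hc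
      · have h1 := mainr r hc hr1
        have hm := le_max_left (2 * K * Real.exp 2) (hat ω 0 / hat ω (3/4))
        nlinarith
      · have h1 : hat ω r ≤ hat ω 0 := hat_mono h0 hint le_rfl hr0 hr1.le
        have h2 : hat ω (3/4) ≤ hat ω ((1 + r) / 2) :=
          hat_mono h0 hint ht0 (by linarith) (by norm_num)
        have h3 : hat ω 0 = (hat ω 0 / hat ω (3/4)) * hat ω (3/4) :=
          (div_mul_cancel₀ _ h34.ne').symm
        have hd : 0 ≤ hat ω 0 / hat ω (3/4) :=
          div_nonneg (hat_nonneg h0 zero_le_one) h34.le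
        have hm := le_max_right (2 * K * Real.exp 2) (hat ω 0 / hat ω (3/4))
        nlinarith [mul_le_mul_of_nonneg_left h2 hd]

end Aux

theorem moment_bound_implies_Dhat (ω : ℝ → ℝ)
    (hω_nonneg : ∀ r ∈ Set.Ico (0:ℝ) 1, 0 ≤ ω r)
    (hω_int : IntervalIntegrable ω volume 0 1)
    (h : ∃ C > 0, ∃ η > 0, ∀ x y : ℝ, 0 < x → x ≤ y →
      moment ω x ≤ C * (y / x) ^ η * moment ω y) :
    ∃ C' > 1, ∀ r ∈ Set.Ico (0:ℝ) 1, hat ω r ≤ C' * hat ω ((1 + r) / 2) := by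
  classical
  set ω' : ℝ → ℝ := fun s => if s ∈ Set.Ico (0:ℝ) 1 then ω s else 0 with hω'
  have h0' : ∀ s, 0 ≤ ω' s := by
    intro s
    rw [hω']
    dsimp only
    split_ifs with hs
    · exact hω_nonneg s hs
    · exact le_rfl
  have keyae : ∀ a : ℝ, 0 ≤ a → ω' =ᵐ[volume.restrict (Set.Ioc a 1)] ω := by
    intro a ha
    have h1 : ∀ᵐ s ∂(volume.restrict (Set.Ioc a 1)), s ∈ Set.Ioc a 1 :=
      ae_restrict_mem measurableSet_Ioc
    have h2 : ∀ᵐ s ∂(volume.restrict (Set.Ioc a 1)), s ≠ 1 := by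
      refine ae_iff.mpr ?_
      have he : {s : ℝ | ¬ s ≠ 1} = {1} := by ext s; simp
      rw [he]
      refine le_antisymm ?_ zero_le
      calc volume.restrict (Set.Ioc a 1) {1} ≤ volume {1} :=
            Measure.le_iff'.mp Measure.restrict_le_self {1}
        _ = 0 := Real.volume_singleton
    filter_upwards [h1, h2] with s hs hs1
    have hmem : s ∈ Set.Ico (0:ℝ) 1 := ⟨le_trans ha hs.1.le, lt_of_le_of_ne hs.2 hs1⟩
    show (if s ∈ Set.Ico (0:ℝ) 1 then ω s else 0) = ω s
    rw [if_pos hmem]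
  have hint' : IntervalIntegrable ω' volume 0 1 := by
    rw [intervalIntegrable_iff_integrableOn_Ioc_of_le zero_le_one] at hω_int ⊢
    exact hω_int.congr (keyae 0 le_rfl).symm
  have hhat : ∀ a : ℝ, 0 ≤ a → a ≤ 1 → hat ω' a = hat ω a := by
    intro a ha ha1
    rw [hat, hat, intervalIntegral.integral_of_le ha1, intervalIntegral.integral_of_le ha1]
    exact integral_congr_ae (keyae a ha)
  have hmomeq : ∀ x : ℝ, moment ω' x = moment ω x := by
    intro x
    rw [moment, moment, intervalIntegral.integral_of_le zero_le_one,
      intervalIntegral.integral_of_le zero_le_one]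
    refine integral_congr_ae ?_
    filter_upwards [keyae 0 le_rfl] with s hs
    rw [hs]
  have h' : ∃ C > 0, ∃ η > 0, ∀ x y : ℝ, 0 < x → x ≤ y →
      moment ω' x ≤ C * (y / x) ^ η * moment ω' y := by
    obtain ⟨C, hC, η, hη, hmom⟩ := h
    exact ⟨C, hC, η, hη, fun x y hx hxy => by
      rw [hmomeq, hmomeq]; exact hmom x y hx hxy⟩
  obtain ⟨C', hC', hbound⟩ := Dhat_of_nonneg ω' h0' hint' h'
  refine ⟨C', hC', fun r hr => ?_⟩
  have h1 := hbound r hr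
  rw [hhat r hr.1 hr.2.le, hhat ((1 + r) / 2) (by linarith [hr.1]) (by linarith [hr.2])] at h1
  exact h1
end

section
/- Let ω ∈ D̂ be a radial weight. For every natural number N ≥ 1 there exists a constant C = C(ω, N) > 0 such that for all x ≥ 1, ∫_0^1 r^x (1-r)^N ω(r) dr ≤ C ω_x / x^N, where ω_x = ∫_0^1 r^x ω(r) dr. -/
open MeasureTheory

/-- a.e.-monotonicity of interval integrals using bounds only on `Ico a 1`. -/
lemma my_integral_mono_Ico {f g : ℝ → ℝ} {a b : ℝ} (hab : a ≤ b) (hb : b ≤ 1)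
    (hf : IntervalIntegrable f volume a b) (hg : IntervalIntegrable g volume a b)
    (h : ∀ x ∈ Set.Ico a (1:ℝ), f x ≤ g x) :
    (∫ x in a..b, f x) ≤ ∫ x in a..b, g x := by
  refine intervalIntegral.integral_mono_ae_restrict hab hf hg ?_
  have h1 : ∀ᵐ (x : ℝ), x ≠ 1 := by
    have h2 : (volume : Measure ℝ) {(1:ℝ)} = 0 := Real.volume_singleton
    exact measure_mono_null (fun x hx => by simpa using hx) h2
  refine (ae_restrict_iff' measurableSet_Icc).mpr ?_
  filter_upwards [h1] with x hx hxIcc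
  exact h x ⟨hxIcc.1, lt_of_le_of_ne (hxIcc.2.trans hb) hx⟩

lemma my_integral_nonneg_Ico {f : ℝ → ℝ} {a b : ℝ} (hab : a ≤ b) (hb : b ≤ 1)
    (hf : IntervalIntegrable f volume a b)
    (h : ∀ x ∈ Set.Ico a (1:ℝ), 0 ≤ f x) :
    0 ≤ ∫ x in a..b, f x := by
  have := my_integral_mono_Ico (f := fun _ => (0:ℝ)) hab hb
    intervalIntegrable_const hf h
  simpa using this

/-- monotonicity of hat. -/
lemma my_hat_anti {ω : ℝ → ℝ} (hω_nonneg : ∀ r ∈ Set.Ico (0:ℝ) 1, 0 ≤ ω r)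
    (hω_int : IntervalIntegrable ω volume 0 1) {u v : ℝ}
    (hu : 0 ≤ u) (huv : u ≤ v) (hv : v ≤ 1) : hat ω v ≤ hat ω u := by
  have huv1 : IntervalIntegrable ω volume u v := by
    apply hω_int.mono_set
    rw [Set.uIcc_of_le huv, Set.uIcc_of_le (by norm_num : (0:ℝ) ≤ 1)]
    exact Set.Icc_subset_Icc hu hv
  have hv1 : IntervalIntegrable ω volume v 1 := by
    apply hω_int.mono_set
    rw [Set.uIcc_of_le hv, Set.uIcc_of_le (by norm_num : (0:ℝ) ≤ 1)]
    exact Set.Icc_subset_Icc (hu.trans huv) le_rfl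
  have hadd : (∫ s in u..v, ω s) + (∫ s in v..1, ω s) = ∫ s in u..1, ω s :=
    intervalIntegral.integral_add_adjacent_intervals huv1 hv1
  have hpos : 0 ≤ ∫ s in u..v, ω s :=
    my_integral_nonneg_Ico huv hv huv1 (fun r hr => hω_nonneg r ⟨hu.trans hr.1, hr.2⟩)
  simp only [hat]
  linarith [hadd]

/-- iterated doubling. -/
lemma my_hat_iter {ω : ℝ → ℝ} {C : ℝ}
    (hD : ∀ r ∈ Set.Ico (0:ℝ) 1, hat ω r ≤ C * hat ω ((1 + r) / 2)) (hC : 0 < C) :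
    ∀ n : ℕ, ∀ t ∈ Set.Ico (0:ℝ) 1, hat ω t ≤ C ^ n * hat ω (1 - (1 - t) / 2 ^ n) := by
  intro n
  induction n with
  | zero => intro t ht; simp
  | succ n ih =>
    intro t ht
    have h2n : (0:ℝ) < 2 ^ n := by positivity
    have hq1 : (1 - t) / 2 ^ n ≤ 1 - t :=
      div_le_self (by linarith [ht.2]) (one_le_pow₀ (by norm_num))
    have hq0 : 0 < (1 - t) / 2 ^ n := div_pos (by linarith [ht.2]) h2n
    have hpmem : 1 - (1 - t) / 2 ^ n ∈ Set.Ico (0:ℝ) 1 :=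
      ⟨by linarith [ht.1], by linarith⟩
    calc hat ω t ≤ C ^ n * hat ω (1 - (1 - t) / 2 ^ n) := ih t ht
      _ ≤ C ^ n * (C * hat ω ((1 + (1 - (1 - t) / 2 ^ n)) / 2)) :=
          mul_le_mul_of_nonneg_left (hD _ hpmem) (by positivity)
      _ = C ^ (n + 1) * hat ω (1 - (1 - t) / 2 ^ (n + 1)) := by
          rw [show (1 + (1 - (1 - t) / 2 ^ n)) / 2 = 1 - (1 - t) / 2 ^ (n + 1) by
            field_simp; ring]
          ring

/-- arithmetic bound for the dyadic series. -/
lemma my_series_bound {C : ℝ} (hC : 0 < C) (N m k : ℕ)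
    (hm : 2 * (2 ^ N * C) ≤ 2 ^ m) :
    Real.exp (-(2 ^ k / 2)) * ((2:ℝ) ^ (k + 1)) ^ N * C ^ (k + 1) ≤
      (m.factorial : ℝ) * 2 ^ m * (2 ^ N * C) * (1 / 2) ^ k := by
  set D : ℝ := 2 ^ N * C with hD
  have hD0 : 0 < D := by positivity
  have hy : (0:ℝ) ≤ 2 ^ k / 2 := by positivity
  have hym : (0:ℝ) < ((2:ℝ) ^ k / 2) ^ m := by positivity
  have hfac : ((2:ℝ) ^ k / 2) ^ m / (m.factorial : ℝ) ≤ Real.exp (2 ^ k / 2) :=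
    Real.pow_div_factorial_le_exp _ hy m
  have hexp_le : Real.exp (-(2 ^ k / 2)) ≤ (m.factorial : ℝ) / ((2:ℝ) ^ k / 2) ^ m := by
    rw [Real.exp_neg]
    calc (Real.exp (2 ^ k / 2))⁻¹ ≤ (((2:ℝ) ^ k / 2) ^ m / (m.factorial : ℝ))⁻¹ :=
          inv_anti₀ (by positivity) hfac
      _ = (m.factorial : ℝ) / ((2:ℝ) ^ k / 2) ^ m := by rw [inv_div]
  have hkey : ((m.factorial : ℝ) / ((2:ℝ) ^ k / 2) ^ m) * ((2:ℝ) ^ (k + 1)) ^ N * C ^ (k + 1)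
      = (m.factorial : ℝ) * 2 ^ m * D * (D / 2 ^ m) ^ k := by
    rw [hD, div_pow, div_pow, ← pow_mul, ← pow_mul]
    field_simp
    ring
  have hhalf : (D / 2 ^ m) ^ k ≤ ((1:ℝ) / 2) ^ k := by
    apply pow_le_pow_left₀ (by positivity)
    rw [div_le_div_iff₀ (by positivity) (by norm_num)]
    linarith
  calc Real.exp (-(2 ^ k / 2)) * ((2:ℝ) ^ (k + 1)) ^ N * C ^ (k + 1)
      ≤ ((m.factorial : ℝ) / ((2:ℝ) ^ k / 2) ^ m) * ((2:ℝ) ^ (k + 1)) ^ N * C ^ (k + 1) := by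
        have h1 : (0:ℝ) ≤ ((2:ℝ) ^ (k + 1)) ^ N := by positivity
        have h2 : (0:ℝ) ≤ C ^ (k + 1) := by positivity
        exact mul_le_mul_of_nonneg_right (mul_le_mul_of_nonneg_right hexp_le h1) h2
    _ = (m.factorial : ℝ) * 2 ^ m * D * (D / 2 ^ m) ^ k := hkey
    _ ≤ (m.factorial : ℝ) * 2 ^ m * D * ((1:ℝ) / 2) ^ k := by
        exact mul_le_mul_of_nonneg_left hhalf (by positivity)
set_option maxHeartbeats 1000000 in
theorem modified_moment_estimate (ω : ℝ → ℝ)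
    (hω_nonneg : ∀ r ∈ Set.Ico (0:ℝ) 1, 0 ≤ ω r)
    (hω_int : IntervalIntegrable ω volume 0 1)
    (hω_pos : ∀ r ∈ Set.Ico (0:ℝ) 1, 0 < hat ω r)
    (hDhat : ∃ C > 1, ∀ r ∈ Set.Ico (0:ℝ) 1, hat ω r ≤ C * hat ω ((1 + r) / 2))
    (N : ℕ) (hN : 1 ≤ N) :
    ∃ C > 0, ∀ x : ℝ, 1 ≤ x →
      (∫ r in (0:ℝ)..1, r ^ x * (1 - r) ^ N * ω r) ≤ C * moment ω x / x ^ N := by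
  obtain ⟨C, hC, hD⟩ := hDhat
  have hC0 : (0:ℝ) < C := by linarith
  have hD0 : (0:ℝ) < 2 ^ N * C := by positivity
  obtain ⟨m, hm⟩ := pow_unbounded_of_one_lt (2 * (2 ^ N * C)) (by norm_num : (1:ℝ) < 2)
  set S : ℝ := 2 * ((m.factorial : ℝ) * 2 ^ m * (2 ^ N * C)) + 1 with hS_def
  have hS0 : 0 < S := by positivity
  refine ⟨3 * S, by positivity, ?_⟩
  intro x hx
  have hx0 : (0:ℝ) < x := by linarith
  set u : ℝ := 1 / (2 * x) with hu_def
  have hu0 : 0 < u := by positivity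
  have hux : u * x = 1 / 2 := by rw [hu_def]; field_simp
  have hu2 : u ≤ 1 / 2 := by
    rw [hu_def, div_le_div_iff₀ (by positivity) (by norm_num)]; linarith
  set s : ℝ := 1 - u with hs_def
  have hs0 : (0:ℝ) ≤ s := by rw [hs_def]; linarith
  have hs1 : s < 1 := by rw [hs_def]; linarith
  have hs_half : (1:ℝ) / 2 ≤ s := by rw [hs_def]; linarith
  -- integrability
  have hsub : ∀ (F : ℝ → ℝ), IntervalIntegrable F volume 0 1 → ∀ a b : ℝ,
      a ∈ Set.Icc (0:ℝ) 1 → b ∈ Set.Icc (0:ℝ) 1 → IntervalIntegrable F volume a b := by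
    intro F hF a b ha hb
    refine hF.mono_set ?_
    rw [Set.uIcc_of_le (by norm_num : (0:ℝ) ≤ 1)]
    exact Set.uIcc_subset_Icc ha hb
  have hgc : Continuous (fun r : ℝ => r ^ x * (1 - r) ^ N) :=
    (Real.continuous_rpow_const hx0.le).mul ((continuous_const.sub continuous_id).pow N)
  have hf01 : IntervalIntegrable (fun r : ℝ => r ^ x * (1 - r) ^ N * ω r) volume 0 1 :=
    hω_int.continuousOn_mul hgc.continuousOn
  have hh01 : IntervalIntegrable (fun r : ℝ => r ^ x * ω r) volume 0 1 :=
    hω_int.continuousOn_mul (Real.continuous_rpow_const hx0.le).continuousOn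
  have hhat_s_pos : 0 < hat ω s := hω_pos s ⟨hs0, hs1⟩
  -- Step A : hat ω s ≤ 3 * moment ω x
  have hkey_exp : Real.exp (-(2 * u)) ≤ 1 - u := by
    have h1 : (1 + u) ^ 2 ≤ Real.exp (2 * u) := by
      have h := Real.add_one_le_exp u
      calc (1 + u) ^ 2 ≤ Real.exp u ^ 2 := by nlinarith
        _ = Real.exp (2 * u) := by rw [two_mul, Real.exp_add]; ring
    have h2 : (1:ℝ) ≤ (1 - u) * (1 + u) ^ 2 := by nlinarith
    have h3 : (1:ℝ) ≤ (1 - u) * Real.exp (2 * u) := by nlinarith [Real.exp_pos (2 * u)]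
    rw [Real.exp_neg]
    have hE : 0 < Real.exp (2 * u) := Real.exp_pos _
    calc (Real.exp (2 * u))⁻¹ = (Real.exp (2 * u))⁻¹ * 1 := by ring
      _ ≤ (Real.exp (2 * u))⁻¹ * ((1 - u) * Real.exp (2 * u)) :=
          mul_le_mul_of_nonneg_left h3 (by positivity)
      _ = 1 - u := by field_simp
  have hA : hat ω s ≤ 3 * moment ω x := by
    have h0s : IntervalIntegrable (fun r : ℝ => r ^ x * ω r) volume 0 s :=
      hsub _ hh01 0 s ⟨le_rfl, by norm_num⟩ ⟨hs0, hs1.le⟩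
    have hs1' : IntervalIntegrable (fun r : ℝ => r ^ x * ω r) volume s 1 :=
      hsub _ hh01 s 1 ⟨hs0, hs1.le⟩ ⟨by norm_num, le_rfl⟩
    have hω_s1 : IntervalIntegrable ω volume s 1 :=
      hsub ω hω_int s 1 ⟨hs0, hs1.le⟩ ⟨by norm_num, le_rfl⟩
    have hsplit : (∫ r in (0:ℝ)..s, r ^ x * ω r) + (∫ r in s..1, r ^ x * ω r) = moment ω x :=
      intervalIntegral.integral_add_adjacent_intervals h0s hs1'
    have h1 : 0 ≤ ∫ r in (0:ℝ)..s, r ^ x * ω r :=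
      my_integral_nonneg_Ico hs0 hs1.le h0s
        (fun r hr => mul_nonneg (Real.rpow_nonneg hr.1 x) (hω_nonneg r hr))
    have h2 : (∫ r in s..1, Real.exp (-1) * ω r) ≤ ∫ r in s..1, r ^ x * ω r := by
      refine my_integral_mono_Ico hs1.le le_rfl (hω_s1.const_mul _) hs1' ?_
      intro r hr
      have hr0 : (0:ℝ) ≤ r := hs0.trans hr.1
      have hωr : 0 ≤ ω r := hω_nonneg r ⟨hr0, hr.2⟩
      have hrx : Real.exp (-1) ≤ r ^ x := by
        have e1 : Real.exp (-(2 * u)) ^ x = Real.exp (-1) := by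
          rw [← Real.exp_mul]
          congr 1
          have : -(2 * u) * x = -(2 * (u * x)) := by ring
          rw [this, hux]; norm_num
        calc Real.exp (-1) = Real.exp (-(2 * u)) ^ x := e1.symm
          _ ≤ s ^ x := Real.rpow_le_rpow (Real.exp_pos _).le (by rw [hs_def]; exact hkey_exp) hx0.le
          _ ≤ r ^ x := Real.rpow_le_rpow hs0 hr.1 hx0.le
      exact mul_le_mul_of_nonneg_right hrx hωr
    have h3 : (∫ r in s..1, Real.exp (-1) * ω r) = Real.exp (-1) * hat ω s := by
      rw [hat]; exact intervalIntegral.integral_const_mul _ _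
    have hmom : Real.exp (-1) * hat ω s ≤ moment ω x := by
      rw [← hsplit, ← h3]; linarith
    have he3 : Real.exp 1 ≤ 3 := by
      have := Real.exp_one_lt_d9; linarith
    have hmom0 : 0 ≤ moment ω x :=
      le_trans (by positivity) hmom
    calc hat ω s = Real.exp 1 * (Real.exp (-1) * hat ω s) := by
          rw [← mul_assoc, ← Real.exp_add]; norm_num
      _ ≤ Real.exp 1 * moment ω x := mul_le_mul_of_nonneg_left hmom (Real.exp_pos 1).le
      _ ≤ 3 * moment ω x := mul_le_mul_of_nonneg_right he3 hmom0
  -- Step B : upper bound for the integral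
  set f : ℝ → ℝ := fun r => r ^ x * (1 - r) ^ N * ω r with hf_def
  -- dyadic points
  set a : ℕ → ℝ := fun k => max (1 - 2 ^ k * u) 0 with ha_def
  have ha_mem : ∀ k, a k ∈ Set.Icc (0:ℝ) s := by
    intro k
    refine ⟨le_max_right _ _, max_le ?_ hs0⟩
    have : (1:ℝ) ≤ 2 ^ k := one_le_pow₀ (by norm_num)
    rw [hs_def]; nlinarith
  have ha_anti : ∀ k, a (k + 1) ≤ a k := by
    intro k
    apply max_le_max _ le_rfl
    have : (2:ℝ) ^ k ≤ 2 ^ (k + 1) := by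
      apply pow_le_pow_right₀ (by norm_num) (Nat.le_succ k)
    nlinarith
  have ha0 : a 0 = s := by
    rw [ha_def]; simp only [pow_zero, one_mul]
    exact max_eq_left hs0
  obtain ⟨K, hK⟩ := pow_unbounded_of_one_lt (2 * x) (by norm_num : (1:ℝ) < 2)
  have haK : a K = 0 := by
    have h1 : (1:ℝ) ≤ 2 ^ K * u := by
      rw [hu_def, mul_one_div, le_div_iff₀ (by positivity), one_mul]
      linarith
    exact max_eq_right (by linarith)
  have hf_mem : ∀ k, a k ∈ Set.Icc (0:ℝ) 1 :=
    fun k => ⟨(ha_mem k).1, (ha_mem k).2.trans hs1.le⟩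
  -- per-term estimate
  have hterm : ∀ k, (∫ r in a (k + 1)..a k, f r) ≤
      ((m.factorial : ℝ) * 2 ^ m * (2 ^ N * C) * (u ^ N * hat ω s)) * (1 / 2) ^ k := by
    intro k
    have hak := ha_mem k
    have hak1 := ha_mem (k + 1)
    set B : ℝ := Real.exp (-(2 ^ k / 2)) * (2 ^ (k + 1) * u) ^ N with hB
    have hB0 : 0 ≤ B := by positivity
    have hωk : IntervalIntegrable ω volume (a (k + 1)) (a k) :=
      hsub ω hω_int _ _ (hf_mem (k + 1)) (hf_mem k)
    have hfk : IntervalIntegrable f volume (a (k + 1)) (a k) :=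
      hsub f hf01 _ _ (hf_mem (k + 1)) (hf_mem k)
    have hpt : ∀ r ∈ Set.Icc (a (k + 1)) (a k), f r ≤ B * ω r := by
      intro r hr
      have hr0 : 0 ≤ r := hak1.1.trans hr.1
      have hrs : r ≤ s := hr.2.trans hak.2
      have hωr : 0 ≤ ω r := hω_nonneg r ⟨hr0, lt_of_le_of_lt hrs hs1⟩
      have hre : r ≤ Real.exp (-(2 ^ k * u)) := by
        rcases le_or_gt (1 - 2 ^ k * u) 0 with hc | hc
        · calc r ≤ a k := hr.2
            _ = 0 := max_eq_right hc
            _ ≤ _ := (Real.exp_pos _).le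
        · calc r ≤ a k := hr.2
            _ = 1 - 2 ^ k * u := max_eq_left hc.le
            _ ≤ Real.exp (-(2 ^ k * u)) := by
                have := Real.add_one_le_exp (-(2 ^ k * u)); linarith
      have hrx : r ^ x ≤ Real.exp (-(2 ^ k / 2)) := by
        calc r ^ x ≤ Real.exp (-(2 ^ k * u)) ^ x := Real.rpow_le_rpow hr0 hre hx0.le
          _ = Real.exp (-(2 ^ k * u) * x) := (Real.exp_mul _ _).symm
          _ = Real.exp (-(2 ^ k / 2)) := by
              congr 1
              have h5 : -(2 ^ k * u) * x = -((2:ℝ) ^ k * (u * x)) := by ring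
              rw [h5, hux]; ring
      have hr1N : (1 - r) ^ N ≤ (2 ^ (k + 1) * u) ^ N := by
        apply pow_le_pow_left₀ (by linarith)
        have h6 : 1 - (2:ℝ) ^ (k + 1) * u ≤ a (k + 1) := le_max_left _ _
        linarith [hr.1]
      calc f r = (r ^ x * (1 - r) ^ N) * ω r := rfl
        _ ≤ (Real.exp (-(2 ^ k / 2)) * (2 ^ (k + 1) * u) ^ N) * ω r := by
            apply mul_le_mul_of_nonneg_right _ hωr
            exact mul_le_mul hrx hr1N (pow_nonneg (by linarith) N) (Real.exp_pos _).le
        _ = B * ω r := by rw [hB]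
    have h7 : (∫ r in a (k + 1)..a k, f r) ≤ ∫ r in a (k + 1)..a k, B * ω r :=
      intervalIntegral.integral_mono_on (ha_anti k) hfk (hωk.const_mul B) hpt
    have h8 : (∫ r in a (k + 1)..a k, B * ω r) = B * ∫ r in a (k + 1)..a k, ω r :=
      intervalIntegral.integral_const_mul _ _
    have h9 : (∫ r in a (k + 1)..a k, ω r) ≤ hat ω (a (k + 1)) := by
      have hω1 : IntervalIntegrable ω volume (a k) 1 :=
        hsub ω hω_int _ _ (hf_mem k) ⟨by norm_num, le_rfl⟩
      have hsp : (∫ r in a (k + 1)..a k, ω r) + (∫ r in a k..1, ω r) = hat ω (a (k + 1)) := by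
        rw [hat]; exact intervalIntegral.integral_add_adjacent_intervals hωk hω1
      have h10 : 0 ≤ ∫ r in a k..1, ω r :=
        my_integral_nonneg_Ico ((hf_mem k).2) le_rfl hω1
          (fun r hr => hω_nonneg r ⟨(hf_mem k).1.trans hr.1, hr.2⟩)
      linarith
    have h11 : hat ω (a (k + 1)) ≤ C ^ (k + 1) * hat ω s := by
      have ht := my_hat_iter hD hC0 (k + 1) (a (k + 1)) ⟨hak1.1, lt_of_le_of_lt hak1.2 hs1⟩
      have h2k : (0:ℝ) < 2 ^ (k + 1) := by positivity
      have h12 : 1 - a (k + 1) ≤ 2 ^ (k + 1) * u := by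
        have h6 : 1 - (2:ℝ) ^ (k + 1) * u ≤ a (k + 1) := le_max_left _ _
        linarith
      have h13 : (1 - a (k + 1)) / 2 ^ (k + 1) ≤ u := by
        rw [div_le_iff₀ h2k]; linarith [mul_comm u ((2:ℝ) ^ (k + 1))]
      have hp : s ≤ 1 - (1 - a (k + 1)) / 2 ^ (k + 1) := by rw [hs_def]; linarith
      have hp1 : 1 - (1 - a (k + 1)) / 2 ^ (k + 1) ≤ 1 := by
        have h14 : 0 ≤ (1 - a (k + 1)) / 2 ^ (k + 1) :=
          div_nonneg (by linarith [hak1.2, hs1]) h2k.le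
        linarith
      calc hat ω (a (k + 1)) ≤ C ^ (k + 1) * hat ω (1 - (1 - a (k + 1)) / 2 ^ (k + 1)) := ht
        _ ≤ C ^ (k + 1) * hat ω s :=
            mul_le_mul_of_nonneg_left (my_hat_anti hω_nonneg hω_int hs0 hp hp1) (by positivity)
    have h14 : (∫ r in a (k + 1)..a k, f r) ≤ B * C ^ (k + 1) * hat ω s := by
      calc (∫ r in a (k + 1)..a k, f r) ≤ B * ∫ r in a (k + 1)..a k, ω r := by rw [← h8]; exact h7
        _ ≤ B * hat ω (a (k + 1)) := mul_le_mul_of_nonneg_left h9 hB0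
        _ ≤ B * (C ^ (k + 1) * hat ω s) := mul_le_mul_of_nonneg_left h11 hB0
        _ = B * C ^ (k + 1) * hat ω s := by ring
    have h15 : B * C ^ (k + 1) ≤ (m.factorial : ℝ) * 2 ^ m * (2 ^ N * C) * (1 / 2) ^ k * u ^ N := by
      have hsb := my_series_bound hC0 N m k hm.le
      rw [hB, mul_pow]
      calc Real.exp (-(2 ^ k / 2)) * (((2:ℝ) ^ (k + 1)) ^ N * u ^ N) * C ^ (k + 1)
          = (Real.exp (-(2 ^ k / 2)) * ((2:ℝ) ^ (k + 1)) ^ N * C ^ (k + 1)) * u ^ N := by ring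
        _ ≤ ((m.factorial : ℝ) * 2 ^ m * (2 ^ N * C) * (1 / 2) ^ k) * u ^ N :=
            mul_le_mul_of_nonneg_right hsb (by positivity)
        _ = _ := by ring
    calc (∫ r in a (k + 1)..a k, f r) ≤ B * C ^ (k + 1) * hat ω s := h14
      _ ≤ ((m.factorial : ℝ) * 2 ^ m * (2 ^ N * C) * (1 / 2) ^ k * u ^ N) * hat ω s :=
          mul_le_mul_of_nonneg_right h15 hhat_s_pos.le
      _ = ((m.factorial : ℝ) * 2 ^ m * (2 ^ N * C) * (u ^ N * hat ω s)) * (1 / 2) ^ k := by ring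
  -- sum over the dyadic pieces
  have hsum_eq : (∫ r in (0:ℝ)..s, f r) = ∑ k ∈ Finset.range K, ∫ r in a (k + 1)..a k, f r := by
    have hadj := intervalIntegral.sum_integral_adjacent_intervals (f := f) (μ := volume)
      (a := a) (n := K) (fun k _ => hsub f hf01 _ _ (hf_mem k) (hf_mem (k + 1)))
    rw [ha0, haK] at hadj
    have h3 : ∀ k ∈ Finset.range K, (∫ r in a (k + 1)..a k, f r)
        = - ∫ r in a k..a (k + 1), f r := fun k _ => intervalIntegral.integral_symm _ _
    rw [Finset.sum_congr rfl h3, Finset.sum_neg_distrib, hadj,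
      intervalIntegral.integral_symm (0:ℝ) s, neg_neg]
  have hmain : (∫ r in (0:ℝ)..s, f r) ≤
      2 * ((m.factorial : ℝ) * 2 ^ m * (2 ^ N * C) * (u ^ N * hat ω s)) := by
    have hc0 : 0 ≤ (m.factorial : ℝ) * 2 ^ m * (2 ^ N * C) * (u ^ N * hat ω s) := by
      have := hhat_s_pos.le; positivity
    rw [hsum_eq]
    calc (∑ k ∈ Finset.range K, ∫ r in a (k + 1)..a k, f r)
        ≤ ∑ k ∈ Finset.range K,
            ((m.factorial : ℝ) * 2 ^ m * (2 ^ N * C) * (u ^ N * hat ω s)) * (1 / 2) ^ k :=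
          Finset.sum_le_sum (fun k _ => hterm k)
      _ = ((m.factorial : ℝ) * 2 ^ m * (2 ^ N * C) * (u ^ N * hat ω s)) *
            ∑ k ∈ Finset.range K, ((1:ℝ) / 2) ^ k := by rw [Finset.mul_sum]
      _ ≤ ((m.factorial : ℝ) * 2 ^ m * (2 ^ N * C) * (u ^ N * hat ω s)) * 2 :=
          mul_le_mul_of_nonneg_left (sum_geometric_two_le K) hc0
      _ = _ := by ring
  -- tail piece
  have htail : (∫ r in s..1, f r) ≤ u ^ N * hat ω s := by
    have hωs1 : IntervalIntegrable ω volume s 1 :=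
      hsub ω hω_int s 1 ⟨hs0, hs1.le⟩ ⟨by norm_num, le_rfl⟩
    have hfs1 : IntervalIntegrable f volume s 1 :=
      hsub f hf01 s 1 ⟨hs0, hs1.le⟩ ⟨by norm_num, le_rfl⟩
    have h16 : (∫ r in s..1, f r) ≤ ∫ r in s..1, u ^ N * ω r := by
      refine my_integral_mono_Ico hs1.le le_rfl hfs1 (hωs1.const_mul _) ?_
      intro r hr
      have hr0 : (0:ℝ) ≤ r := hs0.trans hr.1
      have hωr : 0 ≤ ω r := hω_nonneg r ⟨hr0, hr.2⟩
      have h17 : r ^ x * (1 - r) ^ N ≤ u ^ N := by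
        calc r ^ x * (1 - r) ^ N ≤ 1 * u ^ N := by
              apply mul_le_mul (Real.rpow_le_one hr0 hr.2.le hx0.le)
                (pow_le_pow_left₀ (by linarith [hr.2]) (by linarith [hr.1, hs_def]) N)
                (pow_nonneg (by linarith [hr.2]) N) zero_le_one
          _ = u ^ N := one_mul _
      exact mul_le_mul_of_nonneg_right h17 hωr
    have h18 : (∫ r in s..1, u ^ N * ω r) = u ^ N * hat ω s := by
      rw [hat]; exact intervalIntegral.integral_const_mul _ _
    linarith
  -- total
  have htot : (∫ r in (0:ℝ)..1, f r) ≤ S * (u ^ N * hat ω s) := by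
    have hsp3 : (∫ r in (0:ℝ)..s, f r) + (∫ r in s..1, f r) = ∫ r in (0:ℝ)..1, f r :=
      intervalIntegral.integral_add_adjacent_intervals
        (hsub f hf01 0 s ⟨le_rfl, by norm_num⟩ ⟨hs0, hs1.le⟩)
        (hsub f hf01 s 1 ⟨hs0, hs1.le⟩ ⟨by norm_num, le_rfl⟩)
    have hSe : S * (u ^ N * hat ω s)
        = 2 * ((m.factorial : ℝ) * 2 ^ m * (2 ^ N * C) * (u ^ N * hat ω s)) + u ^ N * hat ω s := by
      rw [hS_def]; ring
    rw [hSe]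
    linarith
  -- conclusion
  have hmom3 : 0 < moment ω x := by linarith
  have huinv : u ≤ 1 / x := by
    rw [hu_def, div_le_div_iff₀ (by positivity) hx0]; linarith
  have hxN : (0:ℝ) < x ^ N := by positivity
  calc (∫ r in (0:ℝ)..1, r ^ x * (1 - r) ^ N * ω r) ≤ S * (u ^ N * hat ω s) := htot
    _ ≤ S * (u ^ N * (3 * moment ω x)) :=
        mul_le_mul_of_nonneg_left (mul_le_mul_of_nonneg_left hA (by positivity)) hS0.le
    _ ≤ S * ((1 / x) ^ N * (3 * moment ω x)) :=
        mul_le_mul_of_nonneg_left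
          (mul_le_mul_of_nonneg_right (pow_le_pow_left₀ hu0.le huinv N) (by linarith)) hS0.le
    _ = 3 * S * moment ω x / x ^ N := by
        rw [div_pow, one_pow]; field_simp
end

section
/- Let ω and ν be radial weights with ω ∈ D and ν ∈ D̂. Then the weight ω(r)·ν̂(r) belongs to D, and there exist constants c, C > 0 such that c ω̂(r) ν̂(r) ≤ ∫_r^1 ω(s) ν̂(s) ds ≤ C ω̂(r) ν̂(r) for all r ∈ [0,1). -/
open MeasureTheory

/-- The class D̂ of radial weights. -/
def Dhat (ω : ℝ → ℝ) : Prop :=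
  ∃ C > 1, ∀ r ∈ Set.Ico (0:ℝ) 1, hat ω r ≤ C * hat ω ((1 + r) / 2)

/-- The class Ď of radial weights. -/
def Dcheck (ω : ℝ → ℝ) : Prop :=
  ∃ K > 1, ∃ C > 1, ∀ r ∈ Set.Ico (0:ℝ) 1, C * hat ω (1 - (1 - r) / K) ≤ hat ω r

/-- The class D = D̂ ∩ Ď. -/
def Dclass (ω : ℝ → ℝ) : Prop := Dhat ω ∧ Dcheck ω

section Aux

lemma int_sub {f : ℝ → ℝ} (hf : IntervalIntegrable f volume 0 1) {a b : ℝ}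
    (ha : 0 ≤ a) (hb : b ≤ 1) (hab : a ≤ b) : IntervalIntegrable f volume a b :=
  hf.mono_set (by
    rw [Set.uIcc_of_le hab, Set.uIcc_of_le zero_le_one]
    exact Set.Icc_subset_Icc ha hb)

lemma hat_split {f : ℝ → ℝ} (hf : IntervalIntegrable f volume 0 1) {r t : ℝ}
    (hr : 0 ≤ r) (hrt : r ≤ t) (ht : t ≤ 1) :
    hat f r = (∫ s in r..t, f s) + hat f t := by
  unfold hat
  rw [intervalIntegral.integral_add_adjacent_intervals
    (int_sub hf hr ht hrt) (int_sub hf (hr.trans hrt) le_rfl ht)]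

lemma integral_mono_Ico {f g : ℝ → ℝ} {a b : ℝ} (hab : a ≤ b)
    (hf : IntervalIntegrable f volume a b) (hg : IntervalIntegrable g volume a b)
    (h : ∀ s ∈ Set.Ico a b, f s ≤ g s) :
    (∫ s in a..b, f s) ≤ ∫ s in a..b, g s := by
  refine intervalIntegral.integral_mono_ae_restrict hab hf hg ?_
  have h1 : ∀ᵐ s ∂(volume : Measure ℝ), s ≠ b := by
    rw [ae_iff]
    simp only [not_not, Set.setOf_eq_eq_singleton]
    exact measure_singleton b
  have h2 : ∀ᵐ s ∂(volume.restrict (Set.Icc a b)), s ∈ Set.Icc a b :=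
    ae_restrict_mem measurableSet_Icc
  filter_upwards [ae_restrict_of_ae h1, h2] with s hs1 hs2
  exact h s ⟨hs2.1, lt_of_le_of_ne hs2.2 hs1⟩

lemma integral_nonneg_Ico {f : ℝ → ℝ} {a b : ℝ} (hab : a ≤ b)
    (hf : IntervalIntegrable f volume a b)
    (h : ∀ s ∈ Set.Ico a b, 0 ≤ f s) :
    0 ≤ ∫ s in a..b, f s := by
  have := integral_mono_Ico hab (intervalIntegrable_const (c := (0:ℝ))) hf h
  simpa using this

lemma hat_anti {f : ℝ → ℝ} (hf : IntervalIntegrable f volume 0 1)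
    (hpos : ∀ r ∈ Set.Ico (0:ℝ) 1, 0 ≤ f r) {r t : ℝ}
    (hr : 0 ≤ r) (hrt : r ≤ t) (ht : t ≤ 1) : hat f t ≤ hat f r := by
  rw [hat_split hf hr hrt ht]
  have h0 : 0 ≤ ∫ s in r..t, f s :=
    integral_nonneg_Ico hrt (int_sub hf hr ht hrt)
      (fun s hs => hpos s ⟨hr.trans hs.1, lt_of_lt_of_le hs.2 ht⟩)
  linarith

lemma hat_one (f : ℝ → ℝ) : hat f 1 = 0 := intervalIntegral.integral_same

lemma hat_nonneg_s8 {f : ℝ → ℝ} (hf : IntervalIntegrable f volume 0 1)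
    (hpos : ∀ r ∈ Set.Ico (0:ℝ) 1, 0 ≤ f r) {r : ℝ}
    (hr : 0 ≤ r) (hr1 : r ≤ 1) : 0 ≤ hat f r := by
  have := hat_anti hf hpos hr hr1 le_rfl
  rwa [hat_one] at this

lemma hat_contOn {f : ℝ → ℝ} (hf : IntervalIntegrable f volume 0 1) :
    ContinuousOn (hat f) (Set.Icc 0 1) := by
  have h : IntegrableOn f (Set.uIcc (0:ℝ) 1) volume := by
    rw [Set.uIcc_of_le zero_le_one]
    exact (intervalIntegrable_iff_integrableOn_Icc_of_le zero_le_one).1 hf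
  have := intervalIntegral.continuousOn_primitive_interval_left h
  rw [Set.uIcc_of_le zero_le_one] at this
  exact this

lemma pt_mem {r κ : ℝ} (hr : r ∈ Set.Ico (0:ℝ) 1) (hκ : 1 ≤ κ) :
    r ≤ 1 - (1 - r) / κ ∧ (1 - (1 - r) / κ) ∈ Set.Ico (0:ℝ) 1 := by
  obtain ⟨hr0, hr1⟩ := hr
  have h1 : (0:ℝ) < 1 - r := by linarith
  have hκ0 : (0:ℝ) < κ := by linarith
  have h2 : (1 - r) / κ ≤ 1 - r := div_le_self h1.le hκ
  have h3 : 0 < (1 - r) / κ := div_pos h1 hκ0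
  exact ⟨by linarith, ⟨by linarith, by linarith⟩⟩

/-- Iterated D̂ condition. -/
lemma dhat_iter {ν : ℝ → ℝ} {C : ℝ}
    (hcond : ∀ r ∈ Set.Ico (0:ℝ) 1, hat ν r ≤ C * hat ν ((1 + r) / 2)) (hC : 0 < C) :
    ∀ n : ℕ, ∀ r ∈ Set.Ico (0:ℝ) 1, hat ν r ≤ C ^ n * hat ν (1 - (1 - r) / 2 ^ n) := by
  intro n
  induction n with
  | zero => intro r hr; simp
  | succ n ih =>
    intro r hr
    have h2n : (1:ℝ) ≤ 2 ^ n := one_le_pow₀ (by norm_num)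
    obtain ⟨hle, hmem⟩ := pt_mem hr h2n
    have step := hcond _ hmem
    have heq : (1 + (1 - (1 - r) / 2 ^ n)) / 2 = 1 - (1 - r) / 2 ^ (n + 1) := by
      have h2 : (2:ℝ) ^ n ≠ 0 := by positivity
      field_simp
      ring
    rw [heq] at step
    calc hat ν r ≤ C ^ n * hat ν (1 - (1 - r) / 2 ^ n) := ih r hr
      _ ≤ C ^ n * (C * hat ν (1 - (1 - r) / 2 ^ (n + 1))) :=
        mul_le_mul_of_nonneg_left step (by positivity)
      _ = C ^ (n + 1) * hat ν (1 - (1 - r) / 2 ^ (n + 1)) := by ring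

/-- Iterated Ď condition. -/
lemma dcheck_iter {ω : ℝ → ℝ} {K C : ℝ} (hK : 1 < K) (hC : 0 < C)
    (hcond : ∀ r ∈ Set.Ico (0:ℝ) 1, C * hat ω (1 - (1 - r) / K) ≤ hat ω r) :
    ∀ m : ℕ, ∀ r ∈ Set.Ico (0:ℝ) 1, C ^ m * hat ω (1 - (1 - r) / K ^ m) ≤ hat ω r := by
  intro m
  induction m with
  | zero => intro r hr; simp
  | succ m ih =>
    intro r hr
    have hKm : (1:ℝ) ≤ K ^ m := one_le_pow₀ hK.le
    obtain ⟨hle, hmem⟩ := pt_mem hr hKm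
    have step := hcond _ hmem
    have heq : 1 - (1 - (1 - (1 - r) / K ^ m)) / K = 1 - (1 - r) / K ^ (m + 1) := by
      have hK0 : K ≠ 0 := by positivity
      have hKm0 : (K:ℝ) ^ m ≠ 0 := by positivity
      field_simp
      ring
    rw [heq] at step
    calc C ^ (m + 1) * hat ω (1 - (1 - r) / K ^ (m + 1))
        = C ^ m * (C * hat ω (1 - (1 - r) / K ^ (m + 1))) := by ring
      _ ≤ C ^ m * hat ω (1 - (1 - r) / K ^ m) :=
        mul_le_mul_of_nonneg_left step (by positivity)
      _ ≤ hat ω r := ih r hr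

end Aux

theorem mul_hat_mem_Dclass (ω ν : ℝ → ℝ)
    (hω_nonneg : ∀ r ∈ Set.Ico (0:ℝ) 1, 0 ≤ ω r)
    (hν_nonneg : ∀ r ∈ Set.Ico (0:ℝ) 1, 0 ≤ ν r)
    (hω_int : IntervalIntegrable ω volume 0 1)
    (hν_int : IntervalIntegrable ν volume 0 1)
    (hω_pos : ∀ r ∈ Set.Ico (0:ℝ) 1, 0 < hat ω r)
    (hν_pos : ∀ r ∈ Set.Ico (0:ℝ) 1, 0 < hat ν r)
    (hω : Dclass ω) (hν : Dhat ν) :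
    Dclass (fun r => ω r * hat ν r) ∧
      ∃ c > 0, ∃ C > 0, ∀ r ∈ Set.Ico (0:ℝ) 1,
        c * (hat ω r * hat ν r) ≤ (∫ s in r..1, ω s * hat ν s) ∧
        (∫ s in r..1, ω s * hat ν s) ≤ C * (hat ω r * hat ν r) := by
  obtain ⟨⟨Cω, hCω, hDω⟩, ⟨K, hK, Cc, hCc, hDc⟩⟩ := hω
  obtain ⟨Cν, hCν, hDν⟩ := hν
  set Φ : ℝ → ℝ := fun r => ω r * hat ν r with hΦdef
  -- integrability of Φ on subintervals of [0,1]
  have hΦ_int : ∀ {a b : ℝ}, 0 ≤ a → b ≤ 1 → a ≤ b →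
      IntervalIntegrable Φ volume a b := by
    intro a b ha hb hab
    refine (int_sub hω_int ha hb hab).mul_continuousOn ?_
    refine (hat_contOn hν_int).mono ?_
    rw [Set.uIcc_of_le hab]
    exact Set.Icc_subset_Icc ha hb
  have hΦ_nonneg : ∀ s ∈ Set.Ico (0:ℝ) 1, 0 ≤ Φ s := fun s hs =>
    mul_nonneg (hω_nonneg s hs) (hat_nonneg_s8 hν_int hν_nonneg hs.1 hs.2.le)
  have hΦ_int01 : IntervalIntegrable Φ volume 0 1 := hΦ_int le_rfl le_rfl zero_le_one
  -- sandwich estimates on subintervals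
  have sandwich : ∀ {r t : ℝ}, 0 ≤ r → r ≤ t → t ≤ 1 →
      (∫ s in r..t, ω s) * hat ν t ≤ (∫ s in r..t, Φ s) ∧
      (∫ s in r..t, Φ s) ≤ (∫ s in r..t, ω s) * hat ν r := by
    intro r t hr hrt ht
    constructor
    · rw [← intervalIntegral.integral_mul_const]
      refine integral_mono_Ico hrt ((int_sub hω_int hr ht hrt).mul_const _)
        (hΦ_int hr ht hrt) ?_
      intro s hs
      have hs01 : s ∈ Set.Ico (0:ℝ) 1 := ⟨hr.trans hs.1, lt_of_lt_of_le hs.2 ht⟩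
      exact mul_le_mul_of_nonneg_left
        (hat_anti hν_int hν_nonneg hs01.1 hs.2.le ht) (hω_nonneg s hs01)
    · rw [← intervalIntegral.integral_mul_const]
      refine integral_mono_Ico hrt (hΦ_int hr ht hrt)
        ((int_sub hω_int hr ht hrt).mul_const _) ?_
      intro s hs
      have hs01 : s ∈ Set.Ico (0:ℝ) 1 := ⟨hr.trans hs.1, lt_of_lt_of_le hs.2 ht⟩
      exact mul_le_mul_of_nonneg_left
        (hat_anti hν_int hν_nonneg hr hs.1 hs01.2.le) (hω_nonneg s hs01)
  have hatΦ : ∀ r : ℝ, hat Φ r = ∫ s in r..1, Φ s := fun r => rfl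
  -- upper bound: hat Φ r ≤ hat ω r * hat ν r
  have upper : ∀ r ∈ Set.Ico (0:ℝ) 1, hat Φ r ≤ hat ω r * hat ν r := by
    intro r hr
    have h := (sandwich hr.1 hr.2.le le_rfl).2
    rw [hatΦ]
    exact h.trans_eq rfl
  -- choose n with K ≤ 2^n
  obtain ⟨n, hn⟩ := pow_unbounded_of_one_lt (R := ℝ) K (by norm_num : (1:ℝ) < 2)
  -- lower bound constant
  set c : ℝ := (1 - 1 / Cc) / Cν ^ n with hc_def
  have hCc0 : (0:ℝ) < Cc := by linarith
  have hc_pos : 0 < c := by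
    apply div_pos
    · have h1 : 1 / Cc < 1 := by rw [div_lt_one hCc0]; exact hCc
      linarith
    · positivity
  have lower : ∀ r ∈ Set.Ico (0:ℝ) 1, c * (hat ω r * hat ν r) ≤ hat Φ r := by
    intro r hr
    obtain ⟨hrt, htmem⟩ := pt_mem hr hK.le
    set t : ℝ := 1 - (1 - r) / K with ht_def
    have ht1 : t ≤ 1 := htmem.2.le
    have h2n : (1:ℝ) ≤ 2 ^ n := one_le_pow₀ (by norm_num)
    obtain ⟨hrt', htmem'⟩ := pt_mem hr h2n
    set t' : ℝ := 1 - (1 - r) / 2 ^ n with ht'_def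
    have htt' : t ≤ t' := by
      have h1r : (0:ℝ) ≤ 1 - r := by linarith [hr.2]
      have hd : (1 - r) / 2 ^ n ≤ (1 - r) / K :=
        div_le_div_of_nonneg_left h1r (by linarith) hn.le
      simp only [ht_def, ht'_def]
      linarith
    -- hat ν t ≥ hat ν r / Cν ^ n
    have hν_chain : hat ν r ≤ Cν ^ n * hat ν t := by
      calc hat ν r ≤ Cν ^ n * hat ν t' := dhat_iter hDν (by linarith) n r hr
        _ ≤ Cν ^ n * hat ν t :=
          mul_le_mul_of_nonneg_left
            (hat_anti hν_int hν_nonneg htmem.1 htt' htmem'.2.le) (by positivity)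
    have h2 : hat ν r / Cν ^ n ≤ hat ν t := by
      rw [div_le_iff₀ (by positivity)]
      linarith [hν_chain, mul_comm (Cν ^ n) (hat ν t)]
    -- hat ω t ≤ hat ω r / Cc
    have h1 : hat ω t ≤ hat ω r / Cc := by
      rw [le_div_iff₀ hCc0]
      have := hDc r hr
      linarith [mul_comm Cc (hat ω t)]
    -- split the integral
    have hsplitΦ : hat Φ r = (∫ s in r..t, Φ s) + hat Φ t :=
      hat_split hΦ_int01 hr.1 hrt ht1
    have hΦt_nonneg : 0 ≤ hat Φ t :=
      hat_nonneg_s8 hΦ_int01 hΦ_nonneg (hr.1.trans hrt) ht1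
    have hsand := (sandwich hr.1 hrt ht1).1
    have hsplitω : hat ω r = (∫ s in r..t, ω s) + hat ω t :=
      hat_split hω_int hr.1 hrt ht1
    have hIω_nonneg : 0 ≤ ∫ s in r..t, ω s :=
      integral_nonneg_Ico hrt (int_sub hω_int hr.1 ht1 hrt)
        (fun s hs => hω_nonneg s ⟨hr.1.trans hs.1, lt_of_lt_of_le hs.2 ht1⟩)
    have hνt_nonneg : 0 ≤ hat ν t :=
      hat_nonneg_s8 hν_int hν_nonneg htmem.1 ht1
    have hνr_nonneg : 0 ≤ hat ν r := hat_nonneg_s8 hν_int hν_nonneg hr.1 hr.2.le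
    have hωr_pos : 0 < hat ω r := hω_pos r hr
    -- core estimate
    have hA : (1 - 1 / Cc) * hat ω r ≤ ∫ s in r..t, ω s := by
      have : hat ω r - hat ω r / Cc ≤ ∫ s in r..t, ω s := by linarith
      have he : (1 - 1 / Cc) * hat ω r = hat ω r - hat ω r / Cc := by
        field_simp
      linarith [he ▸ this]
    have hcore : ((1 - 1 / Cc) * hat ω r) * (hat ν r / Cν ^ n) ≤
        (∫ s in r..t, ω s) * hat ν t := by
      apply mul_le_mul hA h2 (by positivity) hIω_nonneg
    have heq2 : c * (hat ω r * hat ν r) =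
        ((1 - 1 / Cc) * hat ω r) * (hat ν r / Cν ^ n) := by
      rw [hc_def]; field_simp
    calc c * (hat ω r * hat ν r)
        = ((1 - 1 / Cc) * hat ω r) * (hat ν r / Cν ^ n) := heq2
      _ ≤ (∫ s in r..t, ω s) * hat ν t := hcore
      _ ≤ ∫ s in r..t, Φ s := hsand
      _ ≤ hat Φ r := by linarith [hsplitΦ, hΦt_nonneg]
  -- Now assemble everything
  refine ⟨⟨?_, ?_⟩, c, hc_pos, 1, one_pos, fun r hr => ⟨lower r hr, by
    simpa [hatΦ] using upper r hr⟩⟩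
  · -- Dhat Φ
    refine ⟨max 2 (Cω * Cν / c), lt_of_lt_of_le one_lt_two (le_max_left _ _), ?_⟩
    intro r hr
    set m : ℝ := (1 + r) / 2 with hm_def
    have hm01 : m ∈ Set.Ico (0:ℝ) 1 := ⟨by simp only [hm_def]; linarith [hr.1],
      by simp only [hm_def]; linarith [hr.2]⟩
    have hωm_pos : 0 < hat ω m := hω_pos m hm01
    have hνm_pos : 0 < hat ν m := hν_pos m hm01
    have hνr_nonneg : 0 ≤ hat ν r := hat_nonneg_s8 hν_int hν_nonneg hr.1 hr.2.le
    have hstep : hat ω r * hat ν r ≤ (Cω * Cν) * (hat ω m * hat ν m) := by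
      have h1 := hDω r hr
      have h2 := hDν r hr
      have := mul_le_mul h1 h2 hνr_nonneg (by positivity)
      calc hat ω r * hat ν r ≤ (Cω * hat ω m) * (Cν * hat ν m) := this
        _ = (Cω * Cν) * (hat ω m * hat ν m) := by ring
    have hlm := lower m hm01
    have hQ_pos : 0 < hat ω m * hat ν m := mul_pos hωm_pos hνm_pos
    have hPm_pos : 0 < hat Φ m := lt_of_lt_of_le (by positivity) hlm
    have hfin : (Cω * Cν) * (hat ω m * hat ν m) ≤ (Cω * Cν / c) * hat Φ m := by
      have he : (Cω * Cν) * (hat ω m * hat ν m) =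
          (Cω * Cν / c) * (c * (hat ω m * hat ν m)) := by
        field_simp
      rw [he]
      exact mul_le_mul_of_nonneg_left hlm (by positivity)
    calc hat (fun r => ω r * hat ν r) r ≤ hat ω r * hat ν r := upper r hr
      _ ≤ (Cω * Cν) * (hat ω m * hat ν m) := hstep
      _ ≤ (Cω * Cν / c) * hat Φ m := hfin
      _ ≤ max 2 (Cω * Cν / c) * hat Φ m :=
        mul_le_mul_of_nonneg_right (le_max_right _ _) hPm_pos.le
  · -- Dcheck Φ
    obtain ⟨m, hm⟩ := pow_unbounded_of_one_lt (R := ℝ) (2 / c) hCc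
    have hm2 : 2 < c * Cc ^ m := by
      have := (div_lt_iff₀ hc_pos).1 hm
      linarith [mul_comm (Cc ^ m) c]
    have hCcM : c * Cc ^ (m + 1) > 2 := by
      have hCcm_pos : (0:ℝ) < Cc ^ m := by positivity
      have : c * Cc ^ (m + 1) = (c * Cc ^ m) * Cc := by ring
      rw [this]
      nlinarith
    refine ⟨K ^ (m + 1), ?_, c * Cc ^ (m + 1), by linarith, ?_⟩
    · have h1 : (1:ℝ) ≤ K ^ m := one_le_pow₀ hK.le
      calc (1:ℝ) < K := hK
        _ = 1 * K := (one_mul K).symm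
        _ ≤ K ^ m * K := mul_le_mul_of_nonneg_right h1 (by linarith)
        _ = K ^ (m + 1) := by ring
    · intro r hr
      have hKM1 : (1:ℝ) ≤ K ^ (m + 1) := one_le_pow₀ hK.le
      obtain ⟨hrt, htmem⟩ := pt_mem hr hKM1
      set tM : ℝ := 1 - (1 - r) / K ^ (m + 1) with htM_def
      have hup := upper tM htmem
      have hiter := dcheck_iter hK hCc0 hDc (m + 1) r hr
      have hν_anti : hat ν tM ≤ hat ν r :=
        hat_anti hν_int hν_nonneg hr.1 hrt htmem.2.le
      have hνtM_nonneg : 0 ≤ hat ν tM :=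
        hat_nonneg_s8 hν_int hν_nonneg htmem.1 htmem.2.le
      have hωtM_nonneg : 0 ≤ hat ω tM :=
        (hω_pos tM htmem).le
      have hωr_nonneg : 0 ≤ hat ω r := (hω_pos r hr).le
      have hlo := lower r hr
      have hCcM_pos : (0:ℝ) < Cc ^ (m + 1) := by positivity
      calc c * Cc ^ (m + 1) * hat (fun r => ω r * hat ν r) tM
          = c * (Cc ^ (m + 1) * hat Φ tM) := by ring
        _ ≤ c * (Cc ^ (m + 1) * (hat ω tM * hat ν tM)) := by
            apply mul_le_mul_of_nonneg_left _ hc_pos.le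
            exact mul_le_mul_of_nonneg_left hup hCcM_pos.le
        _ = c * ((Cc ^ (m + 1) * hat ω tM) * hat ν tM) := by ring
        _ ≤ c * (hat ω r * hat ν tM) := by
            apply mul_le_mul_of_nonneg_left _ hc_pos.le
            exact mul_le_mul_of_nonneg_right hiter hνtM_nonneg
        _ ≤ c * (hat ω r * hat ν r) := by
            apply mul_le_mul_of_nonneg_left _ hc_pos.le
            exact mul_le_mul_of_nonneg_left hν_anti hωr_nonneg
        _ ≤ hat (fun r => ω r * hat ν r) r := hlo
end
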